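/- Let 𝒦 ⊆ {−K,…,K} with |𝒦| ≥ 3 and η ∈ 𝕂^N with |η_i| = 1 for all i, and for each k ∈ 𝒦 let q̃_k be a static dual certificate at time step k for η. Let q(x,v) = (1/|𝒦|) Σ_{k∈𝒦} q̃_k(x + kτv) be the associated 𝒦-static average certificate. If (x,v) ∈ Ω satisfies |q(x,v)| = 1, then either (x,v) = (x_i,v_i) for some particle i ∈ {1,…,N}, or (x,v) is a ghost particle of the configuration with respect to 𝒦. -/

import Mathlib

open MeasureTheory Complex Real Set

noncomputable section

/-- Phase space: positions and velocities in `ℝ^d`. -/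
abbrev PS (d : ℕ) := (Fin d → ℝ) × (Fin d → ℝ)

/-- The phase-space domain `Ω`. -/
def Omega (d K : ℕ) (τ : ℝ) : Set (PS d) :=
  {p | ∀ k : ℤ, |k| ≤ (K : ℤ) → ∀ j, p.1 j + (k : ℝ) * τ * p.2 j ∈ Set.Icc (0 : ℝ) 1}

/-- The affine set `L_{i,k}` attached to a particle `p₀` and a time sample `k`. -/
def Lset (d K : ℕ) (τ : ℝ) (p₀ : PS d) (k : ℤ) : Set (PS d) :=
  {p ∈ Omega d K τ | ∀ j, (p.1 j - p₀.1 j) + (k : ℝ) * τ * (p.2 j - p₀.2 j) = 0}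

/-- `g` is a ghost particle of the configuration `P` with respect to the
set of time samples `Ks`. -/
def IsGhost {d K N : ℕ} (τ : ℝ) (P : Fin N → PS d) (Ks : Finset ℤ) (g : PS d) : Prop :=
  g ∈ Omega d K τ ∧ ∃ ι : ℤ → Fin N, Set.InjOn ι (Ks : Set ℤ) ∧
    (⋂ k ∈ Ks, Lset d K τ (P (ι k)) k) = {g}

/-- Integral of a complex function against a complex measure, via the Jordan
decompositions of the real and imaginary parts. -/
def cintegral {α : Type*} [MeasurableSpace α] (μ : ComplexMeasure α) (f : α → ℂ) : ℂ :=
  ((∫ x, f x ∂(ComplexMeasure.re μ).toJordanDecomposition.posPart)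
      - ∫ x, f x ∂(ComplexMeasure.re μ).toJordanDecomposition.negPart)
    + Complex.I * ((∫ x, f x ∂(ComplexMeasure.im μ).toJordanDecomposition.posPart)
      - ∫ x, f x ∂(ComplexMeasure.im μ).toJordanDecomposition.negPart)

/-- The total variation norm of a complex measure, defined by duality against
continuous functions bounded by one. -/
def tvNorm {α : Type*} [MeasurableSpace α] [TopologicalSpace α] (μ : ComplexMeasure α) : ℝ :=
  sSup {r | ∃ f : α → ℂ, Continuous f ∧ (∀ x, ‖f x‖ ≤ 1) ∧ r = ‖cintegral μ f‖}

/-- A complex measure is supported on a set `S` if it vanishes on measurable sets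
disjoint from `S`. -/
def SupportedOn {α : Type*} [MeasurableSpace α] (μ : ComplexMeasure α) (S : Set α) : Prop :=
  ∀ t : Set α, MeasurableSet t → Disjoint t S → μ t = 0

/-- The Dirac measure at a point, as a complex measure. -/
def cdirac {α : Type*} [MeasurableSpace α] (a : α) : ComplexMeasure α :=
  (MeasureTheory.Measure.dirac a).toSignedMeasure.toComplexMeasure 0

/-- The test function `p ↦ e^{-2πi l·(x + kτv)}`. -/
def testFn (d : ℕ) (τ : ℝ) (l : Fin d → ℤ) (k : ℤ) : PS d → ℂ :=
  fun p => Complex.exp (-(2 * (π : ℂ) * Complex.I) *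
    ∑ j, (l j : ℂ) * ((p.1 j : ℂ) + (k : ℂ) * (τ : ℂ) * (p.2 j : ℂ)))

/-- The measurement `(𝒢 μ)_{l,k}`. -/
def Gmeas {d : ℕ} (τ : ℝ) (μ : ComplexMeasure (PS d)) (l : Fin d → ℤ) (k : ℤ) : ℂ :=
  cintegral μ (testFn d τ l k)

/-- Two complex measures give the same measurements for all allowed frequencies
`‖l‖_∞ ≤ f_c` and time samples `|k| ≤ K`. -/
def SameMeas {d : ℕ} (K : ℕ) (τ : ℝ) (f_c : ℕ) (μ ν : ComplexMeasure (PS d)) : Prop :=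
  ∀ l : Fin d → ℤ, (∀ j, |l j| ≤ (f_c : ℤ)) → ∀ k : ℤ, |k| ≤ (K : ℤ) →
    Gmeas τ μ l k = Gmeas τ ν l k

/-- The set of allowed frequencies `l ∈ ℤ^d`, `‖l‖_∞ ≤ f_c`. -/
def freqSet (d : ℕ) (f_c : ℕ) : Finset (Fin d → ℤ) :=
  Fintype.piFinset fun _ => Finset.Icc (-(f_c : ℤ)) (f_c : ℤ)

/-- A function on phase space has dynamical form. -/
def DynamicalForm (d K : ℕ) (τ : ℝ) (f_c : ℕ) (q : PS d → ℂ) : Prop :=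
  ∃ c : ℤ → (Fin d → ℤ) → ℂ, ∀ p : PS d,
    q p = ∑ k ∈ Finset.Icc (-(K : ℤ)) (K : ℤ), ∑ l ∈ freqSet d f_c,
      c k l * Complex.exp ((2 * (π : ℂ) * Complex.I) *
        ∑ j, (l j : ℂ) * ((p.1 j : ℂ) + (k : ℂ) * (τ : ℂ) * (p.2 j : ℂ)))

/-- The canonical embedding of `𝕂` (either `ℝ` or `ℂ`) into `ℂ`. -/
def toC {𝕜 : Type*} [RCLike 𝕜] (a : 𝕜) : ℂ :=
  (RCLike.re a : ℝ) + (RCLike.im a : ℝ) * Complex.I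


/-- `qt` is a static dual certificate (a trigonometric polynomial with frequencies
`‖l‖_∞ ≤ f_c`) for the positions `pos` and sign values `ηC`. -/
def StaticCertificate (d f_c : ℕ) {N : ℕ} (pos : Fin N → Fin d → ℝ) (ηC : Fin N → ℂ)
    (qt : (Fin d → ℝ) → ℂ) : Prop :=
  (∃ c : (Fin d → ℤ) → ℂ, ∀ y : Fin d → ℝ,
      qt y = ∑ l ∈ freqSet d f_c,
        c l * Complex.exp ((2 * (π : ℂ) * Complex.I) * ∑ j, (l j : ℂ) * (y j : ℂ))) ∧
  (∀ i, qt (pos i) = ηC i) ∧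
  (∀ y : Fin d → ℝ, (∀ j, y j ∈ Set.Icc (0 : ℝ) 1) → y ∉ Set.range pos → ‖qt y‖ < 1)

/-- If `q` is the `𝒦`-static average certificate built from static dual
certificates `q̃_k`, then any point of `Ω` where `|q| = 1` is either a particle of the
configuration or a ghost particle with respect to `𝒦`. -/
lemma norm_toC {𝕜 : Type*} [RCLike 𝕜] (a : 𝕜) : ‖toC a‖ = ‖a‖ := by
  rw [toC, Complex.norm_add_mul_I, ← RCLike.sqrt_normSq_eq_norm,
    RCLike.normSq_apply]
  ring_nf

theorem average_certificate_unit_modulus_iff_particle_or_ghost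
    {d K N : ℕ} (hd : 1 ≤ d) (τ : ℝ) (hτ : 0 < τ) (f_c : ℕ)
    (Ks : Finset ℤ) (hKs : Ks ⊆ Finset.Icc (-(K : ℤ)) (K : ℤ)) (hcard : 3 ≤ Ks.card)
    (x v : Fin N → Fin d → ℝ)
    (hmem : ∀ i, ((x i, v i) : PS d) ∈ Omega d K τ)
    (hdist : Function.Injective fun i => ((x i, v i) : PS d))
    {𝕜 : Type*} [RCLike 𝕜]
    (η : Fin N → 𝕜) (hη : ∀ i, ‖η i‖ = 1)
    (qt : ℤ → (Fin d → ℝ) → ℂ)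
    (hqt : ∀ k ∈ Ks, StaticCertificate d f_c (fun i j => x i j + (k : ℝ) * τ * v i j)
        (fun i => toC (η i)) (qt k))
    (q : PS d → ℂ)
    (hq : ∀ p : PS d,
      q p = (1 / (Ks.card : ℂ)) * ∑ k ∈ Ks, qt k (fun j => p.1 j + (k : ℝ) * τ * p.2 j)) :
    ∀ p ∈ Omega d K τ, ‖q p‖ = 1 →
      (∃ i, p = ((x i, v i) : PS d)) ∨
        IsGhost (K := K) τ (fun i => ((x i, v i) : PS d)) Ks p := by
  intro p hp hnorm
  have hmK : ∀ k ∈ Ks, |k| ≤ (K : ℤ) := by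
    intro k hk
    exact abs_le.mpr (Finset.mem_Icc.mp (hKs hk))
  have hy : ∀ k ∈ Ks, ∀ j, p.1 j + (k : ℝ) * τ * p.2 j ∈ Set.Icc (0:ℝ) 1 :=
    fun k hk => hp k (hmK k hk)
  -- Each static certificate has norm at most 1 on the cube
  have hub : ∀ k ∈ Ks, ‖qt k (fun j => p.1 j + (k : ℝ) * τ * p.2 j)‖ ≤ 1 := by
    intro k hk
    by_cases hr : (fun j => p.1 j + (k : ℝ) * τ * p.2 j) ∈
        Set.range (fun i j => x i j + (k : ℝ) * τ * v i j)
    · obtain ⟨i, hi⟩ := hr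
      rw [← hi, (hqt k hk).2.1 i, norm_toC, hη i]
    · exact le_of_lt ((hqt k hk).2.2 _ (hy k hk) hr)
  have hmpos : (0:ℝ) < Ks.card := by exact_mod_cast (by omega : 0 < Ks.card)
  -- Each position along the trajectory coincides with a particle's position
  have hrange : ∀ k ∈ Ks, ∃ i : Fin N,
      (fun j => x i j + (k : ℝ) * τ * v i j) = fun j => p.1 j + (k : ℝ) * τ * p.2 j := by
    intro k hk
    by_contra hcon
    have hlt : ‖qt k (fun j => p.1 j + (k : ℝ) * τ * p.2 j)‖ < 1 :=
      (hqt k hk).2.2 _ (hy k hk) (by simpa [Set.mem_range] using hcon)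
    have hsum : ‖∑ k' ∈ Ks, qt k' (fun j => p.1 j + (k' : ℝ) * τ * p.2 j)‖ <
        (Ks.card : ℝ) := by
      calc ‖∑ k' ∈ Ks, qt k' (fun j => p.1 j + (k' : ℝ) * τ * p.2 j)‖
          ≤ ∑ k' ∈ Ks, ‖qt k' (fun j => p.1 j + (k' : ℝ) * τ * p.2 j)‖ := norm_sum_le _ _
        _ < ∑ _k' ∈ Ks, (1:ℝ) := Finset.sum_lt_sum (fun k' hk' => hub k' hk') ⟨k, hk, hlt⟩
        _ = (Ks.card : ℝ) := by simp
    have hlt1 : ‖q p‖ < 1 := by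
      rw [hq p, norm_mul]
      have h1 : ‖(1 / (Ks.card : ℂ))‖ = 1 / (Ks.card : ℝ) := by
        rw [norm_div, norm_one, Complex.norm_natCast]
      rw [h1, div_mul_eq_mul_div, one_mul, div_lt_one hmpos]
      exact hsum
    exact absurd hnorm (ne_of_lt hlt1)
  have hN : 0 < N := by
    obtain ⟨k, hk⟩ := Finset.card_pos.mp (by omega : 0 < Ks.card)
    obtain ⟨i, _⟩ := hrange k hk
    exact i.pos
  haveI : Nonempty (Fin N) := ⟨⟨0, hN⟩⟩
  choose! ι hι using hrange
  -- two trajectories agreeing at two distinct times coincide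
  have key : ∀ (a b : PS d) (k₁ k₂ : ℤ), k₁ ≠ k₂ →
      (∀ j, a.1 j + (k₁ : ℝ) * τ * a.2 j = b.1 j + (k₁ : ℝ) * τ * b.2 j) →
      (∀ j, a.1 j + (k₂ : ℝ) * τ * a.2 j = b.1 j + (k₂ : ℝ) * τ * b.2 j) →
      a = b := by
    intro a b k₁ k₂ hne h1 h2
    have hkc : (k₁ : ℝ) ≠ (k₂ : ℝ) := by exact_mod_cast hne
    have hv : ∀ j, a.2 j = b.2 j := by
      intro j
      have h3 : (((k₁ : ℝ) - k₂) * τ) * (a.2 j - b.2 j) = 0 := by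
        linear_combination h1 j - h2 j
      have h4 : ((k₁ : ℝ) - k₂) * τ ≠ 0 :=
        mul_ne_zero (sub_ne_zero.mpr hkc) (ne_of_gt hτ)
      have := (mul_eq_zero.mp h3).resolve_left h4
      linarith
    have hx : ∀ j, a.1 j = b.1 j := by
      intro j
      have := h1 j
      rw [hv j] at this
      linarith
    exact Prod.ext (funext hx) (funext hv)
  by_cases hinj : Set.InjOn ι (Ks : Set ℤ)
  · right
    refine ⟨hp, ι, hinj, ?_⟩
    ext p'
    simp only [Set.mem_iInter, Set.mem_singleton_iff]
    constructor
    · intro h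
      obtain ⟨k₁, hk₁, k₂, hk₂, hne⟩ := Finset.one_lt_card.mp (by omega : 1 < Ks.card)
      have h1 := (h k₁ hk₁).2
      have h2 := (h k₂ hk₂).2
      have g1 := fun j => congrFun (hι k₁ hk₁) j
      have g2 := fun j => congrFun (hι k₂ hk₂) j
      refine key p' p k₁ k₂ hne (fun j => ?_) (fun j => ?_)
      · have := h1 j; have := g1 j; linear_combination h1 j + g1 j
      · linear_combination h2 j + g2 j
    · rintro rfl k hk
      refine ⟨hp, fun j => ?_⟩
      have := congrFun (hι k hk) j
      linear_combination -this
  · left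
    rw [Set.InjOn] at hinj
    push_neg at hinj
    obtain ⟨k₁, hk₁, k₂, hk₂, heq, hne⟩ := hinj
    refine ⟨ι k₁, ?_⟩
    have g1 := fun j => congrFun (hι k₁ (by exact_mod_cast hk₁)) j
    have g2 := fun j => congrFun (hι k₂ (by exact_mod_cast hk₂)) j
    refine key p ((x (ι k₁), v (ι k₁)) : PS d) k₁ k₂ hne (fun j => ?_) (fun j => ?_)
    · simp only at g1 ⊢; linear_combination -g1 j
    · simp only [heq] at g2 ⊢; linear_combination -g2 j

end
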